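/- arXiv:2502.10777 — 2 statements merged into one kernel-verified Lean document; each statement's English description precedes it below -/
import Mathlib

section
/- For a FIFO queue with the dropping mechanism, the event that bits departing at slot t have waited more than D_max slots is equivalent to the queue-length violation event Q_tmp(t+1) > Q_th(t): if Q(t) + A(t) − S(t) > Σ_{i=t−D_max+1}^{t} A(i) and S(t) > 0, then some bit served at slot t+D_max (or still in the queue at that time) arrived before slot t−D_max+1, i.e., its delay exceeds D_max. -/
open Finset

/-- In a FIFO queue (described by the nondecreasing cumulative arrival
curve `Λ` and cumulative departure curve `Dep`, with `Dep ≤ Λ`), if the queue-length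
violation event occurs at slot `t`, i.e. the pre-drop backlog
`Q_tmp(t+1) = Λ(t) − Dep(t)` exceeds the recent-arrival threshold
`Q_th(t) = Λ(t) − Λ(t − D_max)`, then some bit level `x` still in the queue at the end of
slot `t` arrived by slot `t − D_max` (its arrival slot `sInf {τ | x ≤ Λ τ} ≤ t − D_max`),
so whenever it departs (any slot `τ` with `x ≤ Dep τ`) its delay exceeds `D_max`. -/
theorem fifo_delay_violation_of_queue_violation
    (Λ Dep : ℕ → ℝ) (Dmax t : ℕ)
    (hΛmono : Monotone Λ) (hDmono : Monotone Dep)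
    (hDle : ∀ τ, Dep τ ≤ Λ τ) (hΛ0 : Λ 0 = 0)
    (hDmax : Dmax ≤ t)
    -- queue-length violation: Q_tmp(t+1) > Q_th(t)
    (hviol : Λ t - Dep t > Λ t - Λ (t - Dmax)) :
    ∃ x : ℝ, Dep t < x ∧ x ≤ Λ (t - Dmax) ∧
      sInf {τ : ℕ | x ≤ Λ τ} ≤ t - Dmax ∧
      ∀ τ : ℕ, x ≤ Dep τ → Dmax < τ - sInf {τ' : ℕ | x ≤ Λ τ'} := by
  have hlt : Dep t < Λ (t - Dmax) := by linarith
  refine ⟨Λ (t - Dmax), hlt, le_refl _, ?_, ?_⟩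
  · exact Nat.sInf_le (by simp)
  · intro τ hτ
    have hsInf : sInf {τ' : ℕ | Λ (t - Dmax) ≤ Λ τ'} ≤ t - Dmax :=
      Nat.sInf_le (by simp)
    have htτ : t < τ := by
      by_contra h
      push_neg at h
      exact absurd (le_trans hτ (hDmono h)) (not_le.mpr hlt)
    have : t - Dmax + Dmax = t := Nat.sub_add_cancel hDmax
    omega
end

section
/- If the per-step policy improvement condition E_{s,a ∼ π_new}[A^{π_old}(s,a)] ≥ 0 holds for a finite MDP with discount γ ∈ [0,1), where A^{π_old}(s,a) = r(s,a) + γ·E[V^{π_old}(s')] − V^{π_old}(s), then the new policy's value is at least the old policy's: V^{π_new}(s) ≥ V^{π_old}(s) for all states s, provided the expectation is nonnegative under the state distribution induced by π_new started from each s (performance difference lemma). -/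
open Finset

/-- policy improvement for a finite discounted MDP. If the value
functions of the old and new policies satisfy their Bellman equations, and the
expected advantage of the new policy is nonnegative in every state, then
`V^{π_new}(s) ≥ V^{π_old}(s)` for all states `s`. -/
theorem policy_improvement
    {S A : Type*} [Fintype S] [Fintype A] [Nonempty S] [Nonempty A]
    (P : S → A → S → ℝ) (r : S → A → ℝ) (γ : ℝ) (hγ0 : 0 ≤ γ) (hγ1 : γ < 1)
    (hPnn : ∀ s a s', 0 ≤ P s a s') (hPsum : ∀ s a, ∑ s', P s a s' = 1)
    (πold πnew : S → A → ℝ)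
    (hπoldnn : ∀ s a, 0 ≤ πold s a) (hπoldsum : ∀ s, ∑ a, πold s a = 1)
    (hπnewnn : ∀ s a, 0 ≤ πnew s a) (hπnewsum : ∀ s, ∑ a, πnew s a = 1)
    (Vold Vnew : S → ℝ)
    -- Bellman equations for the two policies
    (hBold : ∀ s, Vold s = ∑ a, πold s a * (r s a + γ * ∑ s', P s a s' * Vold s'))
    (hBnew : ∀ s, Vnew s = ∑ a, πnew s a * (r s a + γ * ∑ s', P s a s' * Vnew s'))
    -- advantage of the old policy
    (Adv : S → A → ℝ)
    (hAdv : ∀ s a, Adv s a = r s a + γ * ∑ s', P s a s' * Vold s' - Vold s)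
    -- nonnegative expected advantage under π_new in every state
    (himpr : ∀ s, 0 ≤ ∑ a, πnew s a * Adv s a) :
    ∀ s, Vold s ≤ Vnew s := by
  set D : S → ℝ := fun s => Vold s - Vnew s with hD
  obtain ⟨s0, -, hs0⟩ := Finset.exists_max_image (Finset.univ : Finset S) D ⟨Classical.arbitrary S, Finset.mem_univ _⟩
  set M := D s0 with hM
  have hDM : ∀ s, D s ≤ M := fun s => hs0 s (Finset.mem_univ s)
  -- key step: D s ≤ γ * M for every s
  have key : ∀ s, D s ≤ γ * M := by
    intro s
    have h1 : Vold s ≤ ∑ a, πnew s a * (r s a + γ * ∑ s', P s a s' * Vold s') := by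
      have := himpr s
      have hsum : ∑ a, πnew s a * Adv s a
          = (∑ a, πnew s a * (r s a + γ * ∑ s', P s a s' * Vold s')) - Vold s := by
        simp only [hAdv, mul_sub]
        rw [Finset.sum_sub_distrib, ← Finset.sum_mul, hπnewsum, one_mul]
      linarith [this, hsum ▸ this]
    have h2 : D s ≤ ∑ a, πnew s a * (γ * ∑ s', P s a s' * D s') := by
      have := hBnew s
      have hexp : ∑ a, πnew s a * (γ * ∑ s', P s a s' * D s')
          = (∑ a, πnew s a * (r s a + γ * ∑ s', P s a s' * Vold s')) - Vnew s := by
        rw [this]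
        rw [← Finset.sum_sub_distrib]
        apply Finset.sum_congr rfl
        intro a _
        have : ∑ s', P s a s' * D s' = (∑ s', P s a s' * Vold s') - ∑ s', P s a s' * Vnew s' := by
          rw [← Finset.sum_sub_distrib]
          apply Finset.sum_congr rfl
          intro s' _
          simp [hD]; ring
        rw [this]; ring
      rw [hexp]
      simp only [hD]
      linarith
    refine h2.trans ?_
    have h3 : ∀ a, πnew s a * (γ * ∑ s', P s a s' * D s') ≤ πnew s a * (γ * M) := by
      intro a
      apply mul_le_mul_of_nonneg_left _ (hπnewnn s a)
      apply mul_le_mul_of_nonneg_left _ hγ0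
      calc ∑ s', P s a s' * D s' ≤ ∑ s', P s a s' * M := by
            apply Finset.sum_le_sum
            intro s' _
            exact mul_le_mul_of_nonneg_left (hDM s') (hPnn s a s')
        _ = M := by rw [← Finset.sum_mul, hPsum, one_mul]
    calc ∑ a, πnew s a * (γ * ∑ s', P s a s' * D s')
        ≤ ∑ a, πnew s a * (γ * M) := Finset.sum_le_sum (fun a _ => h3 a)
      _ = γ * M := by rw [← Finset.sum_mul, hπnewsum, one_mul]
  have hMle : M ≤ γ * M := key s0
  have hM0 : M ≤ 0 := by nlinarith
  intro s
  have := (key s).trans (by nlinarith : γ * M ≤ 0)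
  simpa [hD] using this
end
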